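/- There exists a 10×10 integer matrix S with |det S| = 6 such that Sᵀ · G(U⊕E_8) · S = G(E_7) ⊕ G(A_2) ⊕ ⟨6⟩. In other words, the lattice E_7 ⊕ A_2 ⊕ ⟨6⟩ embeds as a sublattice of index 6 in the even unimodular lattice U ⊕ E_8 of signature (1,9); i.e., E_7 ⊕ A_2 and a vector h of square 6 glue to U ⊕ E_8. -/

import Mathlib

/-- The Gram matrix of the negative-definite root lattice `Aₙ` (0-based indexing:
`i : Fin n` is the vertex `a_{i+1}`): diagonal entries `-2`, entries `1` at
adjacent positions, `0` elsewhere. -/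
def gramA (n : ℕ) : Matrix (Fin n) (Fin n) ℤ :=
  Matrix.of fun i j =>
    if i = j then -2
    else if i.val + 1 = j.val ∨ j.val + 1 = i.val then 1
    else 0

/-- The Gram matrix of the negative-definite root lattice `D_k` (0-based indexing:
`i : Fin k` is the vertex `d_{i+1}`): diagonal entries `-2`, entries `1` at the
edges `{i, i+1}` (1-based, `1 ≤ i ≤ k-2`) and `{k-2, k}` (1-based), `0` elsewhere. -/
def gramD (k : ℕ) : Matrix (Fin k) (Fin k) ℤ :=
  Matrix.of fun i j =>
    if i = j then -2
    else if (i.val + 1 = j.val ∧ j.val + 1 ≤ k - 1) ∨ (j.val + 1 = i.val ∧ i.val + 1 ≤ k - 1) ∨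
        (i.val = k - 3 ∧ j.val = k - 1) ∨ (j.val = k - 3 ∧ i.val = k - 1) then 1
    else 0

/-- The Gram matrix of the negative-definite root lattice `E_l`, `l ∈ {6,7,8}`
(0-based indexing: `i : Fin l` is the vertex `e_{i+1}`): diagonal entries `-2`,
entries `1` at the edges `{i, i+1}` (1-based, `2 ≤ i ≤ l-1`) and `{1, 4}`
(1-based), `0` elsewhere. -/
def gramE (l : ℕ) : Matrix (Fin l) (Fin l) ℤ :=
  Matrix.of fun i j =>
    if i = j then -2
    else if (i.val + 1 = j.val ∧ 1 ≤ i.val) ∨ (j.val + 1 = i.val ∧ 1 ≤ j.val) ∨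
        (i.val = 0 ∧ j.val = 3) ∨ (j.val = 0 ∧ i.val = 3) then 1
    else 0

/-- Block-diagonal (orthogonal) sum of two Gram matrices. -/
def blockSum {m n : ℕ} (A : Matrix (Fin m) (Fin m) ℤ) (B : Matrix (Fin n) (Fin n) ℤ) :
    Matrix (Fin (m + n)) (Fin (m + n)) ℤ :=
  Matrix.reindex finSumFinEquiv finSumFinEquiv (Matrix.fromBlocks A 0 0 B)

/-- The Gram matrix of the hyperbolic plane `U`. -/
def gramU : Matrix (Fin 2) (Fin 2) ℤ := !![0, 1; 1, 0]

/-- The Gram matrix of the even unimodular lattice `U ⊕ E₈` of signature `(1,9)`. -/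
def gramUE8 : Matrix (Fin 10) (Fin 10) ℤ := blockSum gramU (gramE 8)

def Sglue : Matrix (Fin 10) (Fin 10) ℤ :=
  !![0, 0, 0, 0, 0, 0, 0, 1, 0, 2;
     0, 0, 0, 0, 0, 0, 0, -1, 1, 2;
     1, 0, 0, 0, 0, 0, 0, 0, 3, 3;
     0, 1, 0, 0, 0, 0, 0, 0, 2, 2;
     0, 0, 1, 0, 0, 0, 0, 0, 4, 4;
     0, 0, 0, 1, 0, 0, 0, 0, 6, 6;
     0, 0, 0, 0, 1, 0, 0, 0, 5, 5;
     0, 0, 0, 0, 0, 1, 0, 0, 4, 4;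
     0, 0, 0, 0, 0, 0, 1, 0, 3, 3;
     0, 0, 0, 0, 0, 0, 0, 0, 2, 2]


def Lmat : Matrix (Fin 10) (Fin 10) ℤ :=
  !![1, 0, 0, 0, 0, 0, 0, 0, 0, 0;
     0, 1, 0, 0, 0, 0, 0, 0, 0, 0;
     0, 0, 1, 0, 0, 0, 0, 0, 0, 0;
     0, 0, 0, 1, 0, 0, 0, 0, 0, 0;
     0, 0, 0, 0, 1, 0, 0, 0, 0, 0;
     0, 0, 0, 0, 0, 1, 0, 0, 0, 0;
     0, 0, 0, 0, 0, 0, 1, 0, 0, 0;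
     0, 0, 0, 0, 0, 0, 0, 1, 0, 0;
     0, 0, 0, 0, 0, 0, 0, -1, 1, 0;
     0, 0, 0, 0, 0, 0, 0, 0, 2, 1]

def Umat : Matrix (Fin 10) (Fin 10) ℤ :=
  !![1, 0, 0, 0, 0, 0, 0, 0, 3, 3;
     0, 1, 0, 0, 0, 0, 0, 0, 2, 2;
     0, 0, 1, 0, 0, 0, 0, 0, 4, 4;
     0, 0, 0, 1, 0, 0, 0, 0, 6, 6;
     0, 0, 0, 0, 1, 0, 0, 0, 5, 5;
     0, 0, 0, 0, 0, 1, 0, 0, 4, 4;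
     0, 0, 0, 0, 0, 0, 1, 0, 3, 3;
     0, 0, 0, 0, 0, 0, 0, 1, 0, 2;
     0, 0, 0, 0, 0, 0, 0, 0, 1, 4;
     0, 0, 0, 0, 0, 0, 0, 0, 0, -6]

def sigma : Equiv.Perm (Fin 10) where
  toFun := ![2, 3, 4, 5, 6, 7, 8, 0, 1, 9]
  invFun := ![7, 8, 0, 1, 2, 3, 4, 5, 6, 9]
  left_inv := by decide
  right_inv := by decide

lemma det_aux {n : ℕ} (A B C : Matrix (Fin n) (Fin n) ℤ) (σ : Equiv.Perm (Fin n)) (d : ℤ)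
    (hperm : A.submatrix σ id = B * C) (hsgn : Equiv.Perm.sign σ = 1)
    (hB : ∀ i j : Fin n, OrderDual.toDual j < OrderDual.toDual i → B i j = 0)
    (hC : ∀ i j : Fin n, (id j : Fin n) < id i → C i j = 0)
    (hprod : (∏ i, B i i) * (∏ i, C i i) = d) :
    A.det = d := by
  have h1 : (A.submatrix σ id).det = Equiv.Perm.sign σ * A.det := Matrix.det_permute σ A
  rw [hperm, Matrix.det_mul, hsgn, Matrix.det_of_lowerTriangular B (fun i j => hB i j),
    Matrix.det_of_upperTriangular (M := C) (fun i j => hC i j), hprod] at h1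
  simpa using h1.symm

set_option maxRecDepth 10000 in
lemma det_Sglue : Sglue.det = -6 :=
  det_aux Sglue Lmat Umat sigma (-6) (by decide) (by decide)
    (fun i j h => by
      change i < j at h; fin_cases i <;> fin_cases j <;> simp_all [Lmat])
    (fun i j h => by
      change j < i at h; fin_cases i <;> fin_cases j <;> simp_all [Umat]) (by decide)

set_option maxRecDepth 10000 in
set_option maxHeartbeats 2000000 in
/-- The lattice `E₇ ⊕ A₂ ⊕ ⟨6⟩` embeds with index `6` into `U ⊕ E₈`: `E₇ ⊕ A₂` and a vector of square `6` glue to `U ⊕ E₈`. -/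
theorem glue_10 :
    ∃ S : Matrix (Fin 10) (Fin 10) ℤ,
      |S.det| = 6 ∧ S.transpose * gramUE8 * S = blockSum (blockSum (gramE 7) (gramA 2)) !![(6 : ℤ)] := by
  refine ⟨Sglue, ?_, ?_⟩
  · rw [det_Sglue]; decide
  · decide
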